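/- Let G be a strongly regular graph with parameters (n, k, 1, 2). Then the number of induced 4-cycles (quadrilaterals) in G is exactly n*k*(k-2)/8. -/

import Mathlib

/-- The number of `m`-element vertex subsets of `G` inducing a cycle of length `m`. -/
noncomputable def inducedCycleCount {V : Type*} [Fintype V] (G : SimpleGraph V) (m : ℕ) : ℕ :=
  Set.ncard {s : Finset V | s.card = m ∧
    Nonempty (G.induce (↑s : Set V) ≃g SimpleGraph.cycleGraph m)}

open Finset SimpleGraph

private lemma c4_pair : ∀ (a b c : Fin 4), a ≠ b → ¬(SimpleGraph.cycleGraph 4).Adj a b →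
    c ≠ a → c ≠ b → (SimpleGraph.cycleGraph 4).Adj c a ∧ (SimpleGraph.cycleGraph 4).Adj c b := by
  decide

private lemma c4_count :
    (Finset.univ.filter fun p : Fin 4 × Fin 4 =>
      p.1 ≠ p.2 ∧ ¬(SimpleGraph.cycleGraph 4).Adj p.1 p.2).card = 4 := by decide

section Aux

variable {V : Type*} [Fintype V] [DecidableEq V] {G : SimpleGraph V} [DecidableRel G.Adj] {n k : ℕ}

omit [Fintype V] [DecidableEq V] [DecidableRel G.Adj] in
private lemma adj_transfer {s : Finset V} (e : G.induce (↑s : Set V) ≃g SimpleGraph.cycleGraph 4)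
    (a b : ↥(↑s : Set V)) :
    (SimpleGraph.cycleGraph 4).Adj (e a) (e b) ↔ G.Adj ↑a ↑b := by
  rw [e.map_adj_iff, comap_adj]
  rfl

private lemma quad_mem (h : G.IsSRGWith n k 1 2) {u v : V} (huv : u ≠ v)
    (hnadj : ¬ G.Adj u v) :
    ({u, v} ∪ (G.commonNeighbors u v).toFinset : Finset V).card = 4 ∧
    Nonempty (G.induce (↑({u, v} ∪ (G.commonNeighbors u v).toFinset : Finset V) : Set V)
      ≃g SimpleGraph.cycleGraph 4) := by
  have hcard2 : (G.commonNeighbors u v).toFinset.card = 2 := by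
    rw [Set.toFinset_card]; exact h.of_not_adj huv hnadj
  obtain ⟨x, y, hxy, hset⟩ := Finset.card_eq_two.mp hcard2
  have hx : x ∈ G.commonNeighbors u v := by
    rw [← Set.mem_toFinset, hset]; simp
  have hy : y ∈ G.commonNeighbors u v := by
    rw [← Set.mem_toFinset, hset]; simp
  rw [mem_commonNeighbors] at hx hy
  obtain ⟨hux, hvx⟩ := hx
  obtain ⟨huy, hvy⟩ := hy
  have hnxy : ¬ G.Adj x y := by
    intro hadj
    have h1 : Fintype.card (G.commonNeighbors x y) = 1 := h.of_adj x y hadj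
    have hsub : ({u, v} : Finset V) ⊆ (G.commonNeighbors x y).toFinset := by
      intro z hz
      simp only [mem_insert, mem_singleton] at hz
      rw [Set.mem_toFinset, mem_commonNeighbors]
      rcases hz with rfl | rfl
      · exact ⟨hux.symm, huy.symm⟩
      · exact ⟨hvx.symm, hvy.symm⟩
    have h2 : 2 ≤ (G.commonNeighbors x y).toFinset.card := by
      calc 2 = ({u, v} : Finset V).card := by
              rw [card_insert_of_notMem (by simpa), card_singleton]
      _ ≤ _ := card_le_card hsub
    rw [Set.toFinset_card, h1] at h2
    omega
  have hux' : u ≠ x := G.ne_of_adj hux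
  have huy' : u ≠ y := G.ne_of_adj huy
  have hvx' : v ≠ x := G.ne_of_adj hvx
  have hvy' : v ≠ y := G.ne_of_adj hvy
  rw [hset]
  have hte : ({u, v} ∪ {x, y} : Finset V) = {u, v, x, y} := by ext z; simp; tauto
  rw [hte]
  have h4 : ({u, v, x, y} : Finset V).card = 4 := by
    rw [card_insert_of_notMem (by simp [huv, hux', huy']),
      card_insert_of_notMem (by simp [hvx', hvy']),
      card_insert_of_notMem (by simp [hxy]), card_singleton]
  refine ⟨h4, ?_⟩
  have hu' : u ∈ (↑({u, v, x, y} : Finset V) : Set V) := by simp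
  have hv' : v ∈ (↑({u, v, x, y} : Finset V) : Set V) := by simp
  have hx' : x ∈ (↑({u, v, x, y} : Finset V) : Set V) := by simp
  have hy' : y ∈ (↑({u, v, x, y} : Finset V) : Set V) := by simp
  let f : Fin 4 → ↥(↑({u, v, x, y} : Finset V) : Set V) :=
    ![⟨u, hu'⟩, ⟨x, hx'⟩, ⟨v, hv'⟩, ⟨y, hy'⟩]
  have hfv : ∀ i : Fin 4, (f i : V) = ![u, x, v, y] i := by
    intro i; fin_cases i <;> rfl
  have hinj : Function.Injective f := by
    intro i j hij
    have hval : (![u, x, v, y] : Fin 4 → V) i = ![u, x, v, y] j := by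
      rw [← hfv, ← hfv, hij]
    fin_cases i <;> fin_cases j <;> revert hval <;>
      simp [huv, hux', huy', hvx', hvy', hxy, huv.symm, hux'.symm, huy'.symm, hvx'.symm,
        hvy'.symm, hxy.symm, Ne.symm]
  have hbij : Function.Bijective f := by
    rw [Fintype.bijective_iff_injective_and_card]
    refine ⟨hinj, ?_⟩
    rw [Fintype.card_fin, ← Set.toFinset_card, Finset.toFinset_coe, h4]
  have hmap : ∀ i j : Fin 4, (G.induce (↑({u, v, x, y} : Finset V) : Set V)).Adj (f i) (f j) ↔
      (SimpleGraph.cycleGraph 4).Adj i j := by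
    intro i j
    rw [comap_adj]
    fin_cases i <;> fin_cases j <;>
      first
      | exact iff_of_true hux (by decide)
      | exact iff_of_true hux.symm (by decide)
      | exact iff_of_true huy (by decide)
      | exact iff_of_true huy.symm (by decide)
      | exact iff_of_true hvx (by decide)
      | exact iff_of_true hvx.symm (by decide)
      | exact iff_of_true hvy (by decide)
      | exact iff_of_true hvy.symm (by decide)
      | exact iff_of_false hnadj (by decide)
      | exact iff_of_false (fun hc => hnadj hc.symm) (by decide)
      | exact iff_of_false hnxy (by decide)
      | exact iff_of_false (fun hc => hnxy hc.symm) (by decide)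
      | exact iff_of_false (G.irrefl) (by decide)
  have iso : SimpleGraph.cycleGraph 4 ≃g G.induce (↑({u, v, x, y} : Finset V) : Set V) :=
    { toEquiv := Equiv.ofBijective f hbij
      map_rel_iff' := @fun i j => hmap i j }
  exact ⟨iso.symm⟩

omit [Fintype V] [DecidableEq V] [DecidableRel G.Adj] in
private lemma c4_other {s : Finset V} (e : G.induce (↑s : Set V) ≃g SimpleGraph.cycleGraph 4)
    {u v c : V} (hu : u ∈ s) (hv : v ∈ s) (hc : c ∈ s) (huv : u ≠ v) (hnadj : ¬ G.Adj u v)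
    (hcu : c ≠ u) (hcv : c ≠ v) : G.Adj c u ∧ G.Adj c v := by
  have hu' : u ∈ (↑s : Set V) := hu
  have hv' : v ∈ (↑s : Set V) := hv
  have hc' : c ∈ (↑s : Set V) := hc
  have h1 : e ⟨u, hu'⟩ ≠ e ⟨v, hv'⟩ := by
    simp only [ne_eq, EmbeddingLike.apply_eq_iff_eq, Subtype.mk.injEq]; exact huv
  have h2 : ¬(SimpleGraph.cycleGraph 4).Adj (e ⟨u, hu'⟩) (e ⟨v, hv'⟩) := by
    rw [adj_transfer]; exact hnadj
  have h3 : e ⟨c, hc'⟩ ≠ e ⟨u, hu'⟩ := by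
    simp only [ne_eq, EmbeddingLike.apply_eq_iff_eq, Subtype.mk.injEq]; exact hcu
  have h4 : e ⟨c, hc'⟩ ≠ e ⟨v, hv'⟩ := by
    simp only [ne_eq, EmbeddingLike.apply_eq_iff_eq, Subtype.mk.injEq]; exact hcv
  have key := c4_pair _ _ _ h1 h2 h3 h4
  rw [adj_transfer, adj_transfer] at key
  exact key

private lemma c4_fibercnt {s : Finset V}
    (e : G.induce (↑s : Set V) ≃g SimpleGraph.cycleGraph 4) :
    (Finset.univ.offDiag.filter fun p : V × V =>
      ¬G.Adj p.1 p.2 ∧ p.1 ∈ s ∧ p.2 ∈ s).card = 4 := by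
  rw [← c4_count]
  apply Finset.card_bij
    (i := fun p hp => ((e ⟨p.1, (Finset.mem_filter.mp hp).2.2.1⟩ : Fin 4),
      (e ⟨p.2, (Finset.mem_filter.mp hp).2.2.2⟩ : Fin 4)))
  · intro p hp
    obtain ⟨hpd, hna, hp1, hp2⟩ := Finset.mem_filter.mp hp
    rw [Finset.mem_offDiag] at hpd
    simp only [Finset.mem_filter, Finset.mem_univ, true_and]
    constructor
    · simp only [ne_eq, EmbeddingLike.apply_eq_iff_eq, Subtype.mk.injEq]
      exact hpd.2.2
    · rw [adj_transfer]; exact hna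
  · intro p hp q hq hpq
    have h1 := congrArg Prod.fst hpq
    have h2 := congrArg Prod.snd hpq
    simp only at h1 h2
    have h1' := congrArg Subtype.val (e.toEquiv.injective h1)
    have h2' := congrArg Subtype.val (e.toEquiv.injective h2)
    exact Prod.ext h1' h2'
  · intro q hq
    obtain ⟨-, hqne, hqna⟩ := Finset.mem_filter.mp hq
    refine ⟨(↑(e.symm q.1), ↑(e.symm q.2)), ?_, ?_⟩
    · rw [Finset.mem_filter, Finset.mem_offDiag]
      have hne : (↑(e.symm q.1) : V) ≠ ↑(e.symm q.2) := by
        intro hc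
        exact hqne (by simpa using e.symm.toEquiv.injective (Subtype.ext hc))
      have hna : ¬ G.Adj ↑(e.symm q.1) ↑(e.symm q.2) := by
        rw [← adj_transfer e, e.apply_symm_apply, e.apply_symm_apply]
        exact hqna
      exact ⟨⟨Finset.mem_univ _, Finset.mem_univ _, hne⟩, hna, (e.symm q.1).2, (e.symm q.2).2⟩
    · refine Prod.ext ?_ ?_ <;> simp [Subtype.coe_eta]

private lemma c4_fiber_eq (h : G.IsSRGWith n k 1 2) {s : Finset V} (hs4 : s.card = 4)
    (e : G.induce (↑s : Set V) ≃g SimpleGraph.cycleGraph 4) {u v : V}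
    (hu : u ∈ s) (hv : v ∈ s) (huv : u ≠ v) (hnadj : ¬ G.Adj u v) :
    {u, v} ∪ (G.commonNeighbors u v).toFinset = s := by
  have hsub : s \ {u, v} ⊆ (G.commonNeighbors u v).toFinset := by
    intro c hc
    rw [Finset.mem_sdiff] at hc
    obtain ⟨hcs, hcn⟩ := hc
    simp only [Finset.mem_insert, Finset.mem_singleton, not_or] at hcn
    obtain ⟨hadj1, hadj2⟩ := c4_other e hu hv hcs huv hnadj hcn.1 hcn.2
    rw [Set.mem_toFinset, mem_commonNeighbors]
    exact ⟨hadj1.symm, hadj2.symm⟩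
  have huvs : ({u, v} : Finset V) ⊆ s := by
    intro z hz; simp only [Finset.mem_insert, Finset.mem_singleton] at hz
    rcases hz with rfl | rfl <;> assumption
  have hcarduv : ({u, v} : Finset V).card = 2 := by
    rw [Finset.card_insert_of_notMem (by simpa), Finset.card_singleton]
  have hcard : (s \ {u, v}).card = 2 := by
    rw [Finset.card_sdiff_of_subset huvs, hs4, hcarduv]
  have heq : s \ {u, v} = (G.commonNeighbors u v).toFinset := by
    apply Finset.eq_of_subset_of_card_le hsub
    rw [hcard, Set.toFinset_card, h.of_not_adj huv hnadj]
  rw [← heq]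
  ext z
  simp only [Finset.mem_union, Finset.mem_sdiff, Finset.mem_insert, Finset.mem_singleton]
  constructor
  · rintro ((rfl | rfl) | hz)
    · exact hu
    · exact hv
    · exact hz.1
  · intro hz
    by_cases hzu : z = u
    · exact Or.inl (Or.inl hzu)
    by_cases hzv : z = v
    · exact Or.inl (Or.inr hzv)
    · exact Or.inr ⟨hz, by tauto⟩

private lemma nonadj_count (h : G.IsSRGWith n k 1 2) :
    (Finset.univ.offDiag.filter fun p : V × V => ¬G.Adj p.1 p.2).card =
      4 * inducedCycleCount G 4 := by
  classical
  have hfin : {s : Finset V | s.card = 4 ∧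
      Nonempty (G.induce (↑s : Set V) ≃g SimpleGraph.cycleGraph 4)}.Finite := Set.toFinite _
  have hicc : inducedCycleCount G 4 = hfin.toFinset.card := by
    rw [inducedCycleCount, Set.ncard_eq_toFinset_card']
    congr 1
    simp
  rw [hicc]
  rw [Finset.card_eq_sum_card_fiberwise
    (f := fun p : V × V => {p.1, p.2} ∪ (G.commonNeighbors p.1 p.2).toFinset)
    (t := hfin.toFinset) ?_]
  · rw [Finset.sum_congr rfl ?_, Finset.sum_const, smul_eq_mul, mul_comm]
    intro s hs
    rw [Set.Finite.mem_toFinset] at hs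
    obtain ⟨hs4, ⟨e⟩⟩ := hs
    rw [← c4_fibercnt e, Finset.filter_filter]
    apply congrArg Finset.card
    apply Finset.filter_congr
    intro p hp
    rw [Finset.mem_offDiag] at hp
    constructor
    · rintro ⟨hna, hfp⟩
      exact ⟨hna, by rw [← hfp]; simp, by rw [← hfp]; simp⟩
    · rintro ⟨hna, h1, h2⟩
      exact ⟨hna, c4_fiber_eq h hs4 e h1 h2 hp.2.2 hna⟩
  · intro p hp
    rw [Finset.mem_coe, Finset.mem_filter, Finset.mem_offDiag] at hp
    rw [Finset.mem_coe, Set.Finite.mem_toFinset]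
    exact quad_mem h hp.1.2.2 hp.2

private lemma countE (h : G.IsSRGWith n k 1 2) :
    (Finset.univ.offDiag.filter fun p : V × V => G.Adj p.1 p.2).card = n * k := by
  rw [Finset.card_eq_sum_card_fiberwise (f := Prod.fst) (t := Finset.univ)
    (fun x _ => Finset.mem_univ _)]
  have hfib : ∀ v : V,
      ((Finset.univ.offDiag.filter fun p : V × V => G.Adj p.1 p.2).filter
        fun p => p.1 = v).card = k := by
    intro v
    rw [← h.regular v, ← G.card_neighborFinset_eq_degree]
    apply Finset.card_nbij (i := Prod.snd)
    · intro p hp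
      simp only [Finset.mem_coe, Finset.mem_filter, Finset.mem_offDiag, Finset.mem_univ, true_and] at hp
      obtain ⟨⟨-, hadj⟩, h1⟩ := hp
      rw [Finset.mem_coe, mem_neighborFinset]
      rw [h1] at hadj
      exact hadj
    · intro p hp q hq hpq
      simp only [Finset.coe_filter, Set.mem_setOf_eq] at hp hq
      exact Prod.ext (hp.2.trans hq.2.symm) hpq
    · intro w hw
      rw [Finset.mem_coe, mem_neighborFinset] at hw
      refine ⟨(v, w), Finset.mem_coe.mpr ?_, rfl⟩
      rw [Finset.mem_filter, Finset.mem_filter, Finset.mem_offDiag]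
      exact ⟨⟨⟨Finset.mem_univ _, Finset.mem_univ _, G.ne_of_adj hw⟩, hw⟩, rfl⟩
  rw [Finset.sum_congr rfl fun v _ => hfib v, Finset.sum_const, Finset.card_univ, h.card,
    smul_eq_mul]

private lemma countT2 (h : G.IsSRGWith n k 1 2) :
    (Finset.univ.filter fun t : V × V × V =>
      G.Adj t.2.1 t.1 ∧ G.Adj t.2.1 t.2.2 ∧ t.1 ≠ t.2.2).card = n * (k * k - k) := by
  rw [Finset.card_eq_sum_card_fiberwise (f := fun t => t.2.1) (t := Finset.univ)
    (fun x _ => Finset.mem_univ _)]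
  have hfib : ∀ v : V,
      ((Finset.univ.filter fun t : V × V × V =>
        G.Adj t.2.1 t.1 ∧ G.Adj t.2.1 t.2.2 ∧ t.1 ≠ t.2.2).filter
        fun t => t.2.1 = v).card = k * k - k := by
    intro v
    have hoff : (G.neighborFinset v).offDiag.card = k * k - k := by
      rw [Finset.offDiag_card, G.card_neighborFinset_eq_degree, h.regular v]
    rw [← hoff]
    apply Finset.card_nbij (i := fun t => (t.1, t.2.2))
    · intro t ht
      simp only [Finset.mem_coe, Finset.mem_filter, Finset.mem_univ, true_and] at ht
      obtain ⟨⟨ha1, ha2, hne⟩, hv⟩ := ht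
      rw [hv] at ha1 ha2
      exact Finset.mem_offDiag.mpr ⟨mem_neighborFinset _ _ _ |>.mpr ha1,
        mem_neighborFinset _ _ _ |>.mpr ha2, hne⟩
    · intro t ht t' ht' htt
      simp only [Finset.coe_filter, Set.mem_setOf_eq] at ht ht'
      have h1 := congrArg Prod.fst htt
      have h2 := congrArg Prod.snd htt
      simp only at h1 h2
      exact Prod.ext h1 (Prod.ext (ht.2.trans ht'.2.symm) h2)
    · intro p hp
      rw [Finset.mem_coe, Finset.mem_offDiag] at hp
      obtain ⟨h1, h2, hne⟩ := hp
      rw [mem_neighborFinset] at h1 h2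
      refine ⟨(p.1, v, p.2), Finset.mem_coe.mpr ?_, rfl⟩
      rw [Finset.mem_filter, Finset.mem_filter]
      exact ⟨⟨Finset.mem_univ _, h1, h2, hne⟩, rfl⟩
  rw [Finset.sum_congr rfl fun v _ => hfib v, Finset.sum_const, Finset.card_univ, h.card,
    smul_eq_mul]

private lemma fib_common {p1 p2 : V} (hne : p1 ≠ p2) :
    ((Finset.univ.filter fun t : V × V × V =>
      G.Adj t.2.1 t.1 ∧ G.Adj t.2.1 t.2.2 ∧ t.1 ≠ t.2.2).filter
        fun t => (t.1, t.2.2) = (p1, p2)).card = Fintype.card (G.commonNeighbors p1 p2) := by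
  rw [← Set.toFinset_card]
  apply Finset.card_nbij (i := fun t => t.2.1)
  · intro t ht
    simp only [Finset.mem_coe, Finset.mem_filter, Finset.mem_univ, true_and, Prod.mk.injEq] at ht
    obtain ⟨⟨h1, h2, -⟩, hp1, hp2⟩ := ht
    rw [Finset.mem_coe, Set.mem_toFinset, mem_commonNeighbors]
    rw [hp1] at h1; rw [hp2] at h2
    exact ⟨h1.symm, h2.symm⟩
  · intro t ht t' ht' htt
    simp only [Finset.coe_filter, Set.mem_setOf_eq, Prod.mk.injEq] at ht ht'
    exact Prod.ext (ht.2.1.trans ht'.2.1.symm) (Prod.ext htt (ht.2.2.trans ht'.2.2.symm))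
  · intro w hw
    rw [Finset.mem_coe, Set.mem_toFinset, mem_commonNeighbors] at hw
    refine ⟨(p1, w, p2), Finset.mem_coe.mpr ?_, rfl⟩
    rw [Finset.mem_filter, Finset.mem_filter]
    exact ⟨⟨Finset.mem_univ _, hw.1.symm, hw.2.symm, hne⟩, rfl⟩

private lemma countT3 (h : G.IsSRGWith n k 1 2) :
    (Finset.univ.filter fun t : V × V × V =>
      G.Adj t.2.1 t.1 ∧ G.Adj t.2.1 t.2.2 ∧ t.1 ≠ t.2.2).card =
    (Finset.univ.offDiag.filter fun p : V × V => G.Adj p.1 p.2).card +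
      2 * (Finset.univ.offDiag.filter fun p : V × V => ¬G.Adj p.1 p.2).card := by
  rw [Finset.card_eq_sum_card_fiberwise (f := fun t => (t.1, t.2.2)) (t := Finset.univ.offDiag)
    ?good]
  case good =>
    intro t ht
    simp only [Finset.mem_coe, Finset.mem_filter, Finset.mem_univ, true_and] at ht
    exact Finset.mem_offDiag.mpr ⟨Finset.mem_univ _, Finset.mem_univ _, ht.2.2⟩
  rw [← Finset.sum_filter_add_sum_filter_not Finset.univ.offDiag
    (fun p : V × V => G.Adj p.1 p.2)]
  congr 1
  · rw [Finset.sum_congr rfl ?_, Finset.sum_const, smul_eq_mul, mul_one]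
    intro p hp
    rw [Finset.mem_filter, Finset.mem_offDiag] at hp
    have hfc := fib_common (G := G) hp.1.2.2
    rw [show ((p.1, p.2) : V × V) = p from rfl] at hfc
    rw [hfc, h.of_adj p.1 p.2 hp.2]
  · rw [Finset.sum_congr rfl ?_, Finset.sum_const, smul_eq_mul, mul_comm]
    intro p hp
    rw [Finset.mem_filter, Finset.mem_offDiag] at hp
    have hfc := fib_common (G := G) hp.1.2.2
    rw [show ((p.1, p.2) : V × V) = p from rfl] at hfc
    rw [hfc, h.of_not_adj hp.1.2.2 hp.2]

end Aux

theorem stmt_5 {V : Type*} [Fintype V] (G : SimpleGraph V) [DecidableRel G.Adj]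
    {n k : ℕ} (h : G.IsSRGWith n k 1 2) :
    8 * inducedCycleCount G 4 = n * k * (k - 2) := by
  letI := Classical.decEq V
  have e1 := countE h
  have e2 := countT2 h
  have e3 := countT3 h
  have e4 := nonadj_count h
  rw [e2, e1, e4] at e3
  -- e3 : n * (k * k - k) = n * k + 2 * (4 * inducedCycleCount G 4)
  rcases Nat.lt_or_ge k 2 with hk | hk
  · interval_cases k <;> simp at e3 ⊢ <;> omega
  · obtain ⟨m, rfl⟩ : ∃ m, k = m + 2 := ⟨k - 2, by omega⟩
    have expand : (m + 2) * (m + 2) - (m + 2) = (m + 2) * m + (m + 2) := by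
      have hr : (m + 2) * (m + 2) = (m + 2) * m + 2 * (m + 2) := by ring
      omega
    rw [expand, Nat.mul_add] at e3
    have hassoc : n * ((m + 2) * m) = n * (m + 2) * m := by ring
    have hk2 : m + 2 - 2 = m := by omega
    rw [hk2]
    linarith
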